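/- arXiv:2205.13699 — 2 statements merged into one kernel-verified Lean document; each statement's English description precedes it below -/
import Mathlib

section
/- Let d ≥ 1 and A ∈ ℝ^{d×d}. Let ε₁ and ε₂ be independent random vectors in ℝ^d whose coordinates are i.i.d. standard normal (i.e., ε₁, ε₂ ~ N(0, I_d) independently). Then A is symmetric (A = Aᵀ) if and only if E[(ε₂ᵀ (A − Aᵀ) ε₁)²] = 0. -/
open MeasureTheory ProbabilityTheory Matrix
open scoped BigOperators

instance : (gaussianReal 0 1).IsOpenPosMeasure := by
  constructor
  intro U hU hne
  rw [gaussianReal_of_var_ne_zero 0 one_ne_zero, withDensity_apply _ hU.measurableSet]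
  have hpos : 0 < ∫⁻ x in U, gaussianPDF 0 1 x := by
    rw [lintegral_pos_iff_support (measurable_gaussianPDF 0 1)]
    have hs : Function.support (gaussianPDF 0 1) = Set.univ := by
      ext x; simp [Function.mem_support, (gaussianPDF_pos 0 one_ne_zero x).ne']
    rw [hs, Measure.restrict_apply_univ]
    exact hU.measure_pos volume hne
  exact hpos.ne'

lemma integrable_pow_gaussianReal (n : ℕ) :
    Integrable (fun x : ℝ => x ^ n) (gaussianReal 0 1) := by
  rw [gaussianReal_of_var_ne_zero 0 one_ne_zero,
    integrable_withDensity_iff (measurable_gaussianPDF 0 1)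
      (ae_of_all _ fun x => ENNReal.ofReal_lt_top)]
  have h := integrable_rpow_mul_exp_neg_mul_sq (by norm_num : (0:ℝ) < 2⁻¹)
    (s := (n : ℝ)) (lt_of_lt_of_le neg_one_lt_zero (Nat.cast_nonneg n))
  simp_rw [Real.rpow_natCast] at h
  refine (h.const_mul ((Real.sqrt (2 * Real.pi))⁻¹)).congr (ae_of_all _ fun x => ?_)
  simp only [gaussianPDF_def, ENNReal.toReal_ofReal (gaussianPDFReal_nonneg _ _ _)]
  simp only [gaussianPDFReal]
  push_cast
  ring_nf

lemma measurePreserving_eval_gauss {m : ℕ} (i : Fin (m + 1)) :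
    MeasurePreserving (fun y : Fin (m + 1) → ℝ => y i)
      (Measure.pi fun _ => gaussianReal 0 1) (gaussianReal 0 1) := by
  have h1 := measurePreserving_piFinSuccAbove (fun _ : Fin (m + 1) => gaussianReal 0 1) i
  have h2 : MeasurePreserving (Prod.fst : ℝ × (Fin m → ℝ) → ℝ)
      ((gaussianReal 0 1).prod (Measure.pi fun _ : Fin m => gaussianReal 0 1))
      (gaussianReal 0 1) :=
    ⟨measurable_fst, by rw [Measure.map_fst_prod]; simp⟩
  exact h2.comp h1

lemma integrable_eval_pow {d : ℕ} (i : Fin d) (n : ℕ) :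
    Integrable (fun y : Fin d → ℝ => y i ^ n) (Measure.pi fun _ => gaussianReal 0 1) := by
  cases d with
  | zero => exact i.elim0
  | succ m =>
    exact ((measurePreserving_eval_gauss i).integrable_comp
      (integrable_pow_gaussianReal n).1).2 (integrable_pow_gaussianReal n)

lemma integrable_eval_mul {d : ℕ} (i k : Fin d) :
    Integrable (fun y : Fin d → ℝ => y i * y k) (Measure.pi fun _ => gaussianReal 0 1) := by
  have hg : Integrable (fun y : Fin d → ℝ => (y i ^ 2 + y k ^ 2) / 2)
      (Measure.pi fun _ => gaussianReal 0 1) :=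
    ((integrable_eval_pow i 2).add (integrable_eval_pow k 2)).div_const 2
  refine hg.mono' ?_ (ae_of_all _ fun y => ?_)
  · exact ((measurable_pi_apply i).mul (measurable_pi_apply k)).aestronglyMeasurable
  · rw [Real.norm_eq_abs, abs_mul]
    nlinarith [sq_abs (y i), sq_abs (y k), sq_nonneg (|y i| - |y k|), abs_nonneg (y i),
      abs_nonneg (y k)]

lemma integrable_sq_sum {d : ℕ} (B : Matrix (Fin d) (Fin d) ℝ) :
    Integrable (fun ε : (Fin d → ℝ) × (Fin d → ℝ) =>
        (∑ i, ∑ j, ε.2 i * B i j * ε.1 j) ^ 2)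
      ((Measure.pi fun _ : Fin d => gaussianReal 0 1).prod
        (Measure.pi fun _ : Fin d => gaussianReal 0 1)) := by
  have hexp : ∀ ε : (Fin d → ℝ) × (Fin d → ℝ),
      (∑ i, ∑ j, ε.2 i * B i j * ε.1 j) ^ 2 =
        ∑ i, ∑ k, ∑ j, ∑ l, (B i j * B k l) * ((ε.1 j * ε.1 l) * (ε.2 i * ε.2 k)) := by
    intro ε
    rw [sq, Finset.sum_mul_sum]
    refine Finset.sum_congr rfl fun i _ => ?_
    refine Finset.sum_congr rfl fun k _ => ?_
    rw [Finset.sum_mul_sum]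
    refine Finset.sum_congr rfl fun j _ => ?_
    refine Finset.sum_congr rfl fun l _ => ?_
    ring
  simp_rw [hexp]
  refine integrable_finset_sum _ fun i _ => ?_
  refine integrable_finset_sum _ fun k _ => ?_
  refine integrable_finset_sum _ fun j _ => ?_
  refine integrable_finset_sum _ fun l _ => ?_
  exact (((integrable_eval_mul j l).mul_prod (integrable_eval_mul i k))).const_mul _

/-- A matrix `A ∈ ℝ^{d×d}` is symmetric if and only if
`E[(ε₂ᵀ (A − Aᵀ) ε₁)²] = 0`, where `ε₁, ε₂ ~ N(0, I_d)` are independent standard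
Gaussian random vectors. -/
theorem matrix_symm_iff_gaussian_expectation_zero {d : ℕ} (hd : 1 ≤ d)
    (A : Matrix (Fin d) (Fin d) ℝ) :
    A.IsSymm ↔
      ∫ ε : (Fin d → ℝ) × (Fin d → ℝ),
          (∑ i, ∑ j, ε.2 i * (A - Aᵀ) i j * ε.1 j) ^ 2
        ∂((Measure.pi fun _ : Fin d => gaussianReal 0 1).prod
            (Measure.pi fun _ : Fin d => gaussianReal 0 1)) = 0 := by
  constructor
  · intro h
    have hB : A - Aᵀ = 0 := sub_eq_zero.mpr h.symm
    rw [hB]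
    simp
  · intro h
    have hae := (integral_eq_zero_iff_of_nonneg (fun ε => sq_nonneg _)
      (integrable_sq_sum (A - Aᵀ))).mp h
    have hcont : Continuous (fun ε : (Fin d → ℝ) × (Fin d → ℝ) =>
        (∑ i, ∑ j, ε.2 i * (A - Aᵀ) i j * ε.1 j) ^ 2) := by
      refine (Continuous.pow ?_ 2)
      refine continuous_finset_sum _ fun i _ => continuous_finset_sum _ fun j _ => ?_
      exact (((continuous_apply i).comp continuous_snd).mul continuous_const).mul
        ((continuous_apply j).comp continuous_fst)
    haveI : ((Measure.pi fun _ : Fin d => gaussianReal 0 1).prod (Measure.pi fun _ : Fin d => gaussianReal 0 1)).IsOpenPosMeasure :=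
      @Measure.prod.instIsOpenPosMeasure _ _ _ _ _ _ inferInstance _ _ inferInstance inferInstance
    have heq := (hcont.ae_eq_iff_eq _ continuous_const).mp hae
    have key : ∀ i j, (A - Aᵀ) i j = 0 := by
      intro i0 j0
      have h0 := congrFun heq (Pi.single j0 1, Pi.single i0 1)
      simp only [Pi.zero_apply] at h0
      have hsum : ∑ i, ∑ j, (Pi.single i0 1 : Fin d → ℝ) i * ((A - Aᵀ) i j) * (Pi.single j0 1 : Fin d → ℝ) j
          = (A - Aᵀ) i0 j0 := by
        simp [Pi.single_apply, mul_ite, ite_mul, Finset.sum_ite_eq', Finset.sum_ite_eq]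
      rw [hsum] at h0
      exact pow_eq_zero_iff two_ne_zero |>.mp h0
    rw [Matrix.IsSymm]
    ext i j
    have := key j i
    simpa [Matrix.sub_apply, sub_eq_zero] using this
end

section
/- Let d ≥ 1, let μ be a probability measure on ℝ with mean zero (∫ x dμ = 0), finite second moment m₂ = ∫ x² dμ and finite fourth moment m₄ = ∫ x⁴ dμ. Let ε₁ and ε₂ be independent random vectors in ℝ^d whose coordinates are i.i.d. samples from μ. Let A ∈ ℝ^{d×d} and set B = A − Aᵀ. Then E[(ε₂ᵀ B ε₁)⁴] = m₄² Σ_{a,b} B_{ab}⁴ + 6 m₂² m₄ Σ_a Σ_{b≠d'} B_{ab}² B_{ad'}² + 3 m₂⁴ Σ_{a≠c} Σ_{b≠d'} (B_{ab}² B_{cd'}² + 2 B_{ab} B_{ad'} B_{cb} B_{cd'}). -/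
open MeasureTheory ProbabilityTheory Matrix
open scoped BigOperators

section
variable {μ : Measure ℝ} [IsProbabilityMeasure μ]

lemma my_pi_integral {n : ℕ} (f : Fin n → ℝ → ℝ) :
    ∫ x : Fin n → ℝ, ∏ i, f i (x i) ∂(Measure.pi fun _ => μ) = ∏ i, ∫ x, f i x ∂μ := by
  letI : MeasureSpace ℝ := ⟨μ⟩
  exact integral_fintype_prod_eq_prod f

lemma prod_moment_one {n : ℕ} (p : Fin n) (e : Fin n → ℕ)
    (h0 : ∀ c, c ≠ p → e c = 0) :
    (∏ c, ∫ t : ℝ, t ^ e c ∂μ) = ∫ t : ℝ, t ^ e p ∂μ := by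
  refine Finset.prod_eq_single p (fun c _ hc => ?_) (by simp)
  rw [h0 c hc]; simp

lemma prod_moment_two {n : ℕ} {p q : Fin n} (hpq : p ≠ q) (e : Fin n → ℕ)
    (h0 : ∀ c, c ≠ p → c ≠ q → e c = 0) :
    (∏ c, ∫ t : ℝ, t ^ e c ∂μ) = (∫ t : ℝ, t ^ e p ∂μ) * (∫ t : ℝ, t ^ e q ∂μ) := by
  have hp := Finset.prod_pair (f := fun c => ∫ t : ℝ, t ^ e c ∂μ) hpq
  rw [← hp]
  refine (Finset.prod_subset (Finset.subset_univ _) fun c _ hc => ?_).symm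
  simp only [Finset.mem_insert, Finset.mem_singleton, not_or] at hc
  rw [h0 c hc.1 hc.2]; simp

lemma moment4 (hmean : ∫ x, x ∂μ = 0) {n : ℕ} (i j k l : Fin n) :
    ∫ x : Fin n → ℝ, x i * x j * x k * x l ∂(Measure.pi fun _ => μ) =
      (if i = j ∧ k = l ∧ i = k then ∫ x, x ^ 4 ∂μ else 0)
      + (if i = j ∧ k = l ∧ i ≠ k then (∫ x, x ^ 2 ∂μ) ^ 2 else 0)
      + (if i = k ∧ j = l ∧ i ≠ j then (∫ x, x ^ 2 ∂μ) ^ 2 else 0)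
      + (if i = l ∧ j = k ∧ i ≠ j then (∫ x, x ^ 2 ∂μ) ^ 2 else 0) := by
  have m1 : ∫ t : ℝ, t ^ 1 ∂μ = 0 := by simpa using hmean
  set e : Fin n → ℕ := fun c =>
    (if i = c then 1 else 0) + (if j = c then 1 else 0) + (if k = c then 1 else 0)
      + (if l = c then 1 else 0) with he
  have hx : (fun x : Fin n → ℝ => x i * x j * x k * x l)
      = fun x => ∏ c, (fun (c : Fin n) (t : ℝ) => t ^ e c) c (x c) := by
    funext x
    simp only [he, pow_add, Finset.prod_mul_distrib, pow_ite, pow_zero, pow_one,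
      Finset.prod_ite_eq, Finset.mem_univ, if_true]
  rw [hx, my_pi_integral (fun c t => t ^ e c)]
  by_cases hij : i = j
  · by_cases hkl : k = l
    · by_cases hik : i = k
      · -- all four equal: m4
        rw [prod_moment_one i e (fun c hc => by
          have h2 := Ne.symm hc
          simp [he, ← hij, ← hkl, ← hik, h2])]
        have h4 : e i = 4 := by simp [he, ← hij, ← hkl, ← hik]
        rw [h4, if_pos ⟨hij, hkl, hik⟩,
          if_neg (fun h => h.2.2 hik), if_neg (fun h : i = k ∧ j = l ∧ i ≠ j => h.2.2 hij),
          if_neg (fun h : i = l ∧ j = k ∧ i ≠ j => h.2.2 hij)]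
        ring
      · -- pairs (i=j), (k=l), i ≠ k
        rw [prod_moment_two hik e (fun c hci hck => by
          have h2 := Ne.symm hci; have h3 := Ne.symm hck
          simp [he, ← hij, ← hkl, h2, h3])]
        have h2 : e i = 2 := by simp [he, ← hij, ← hkl, hik, Ne.symm hik]
        have h2' : e k = 2 := by simp [he, ← hij, ← hkl, hik, Ne.symm hik]
        rw [h2, h2', if_neg (fun h : i = j ∧ k = l ∧ i = k => hik h.2.2),
          if_pos ⟨hij, hkl, hik⟩, if_neg (fun h : i = k ∧ j = l ∧ i ≠ j => hik h.1),
          if_neg (fun h : i = l ∧ j = k ∧ i ≠ j => hik (h.1.trans hkl.symm))]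
        ring
    · -- k ≠ l: zero
      have hz : ∏ c, ∫ t : ℝ, t ^ e c ∂μ = 0 := by
        by_cases hli : l = i
        · refine Finset.prod_eq_zero (Finset.mem_univ k) ?_
          have h1 : ¬ i = k := fun h => hkl (h.symm.trans hli.symm)
          have h1' : ¬ j = k := fun h => h1 (hij.trans h)
          have h2 : ¬ l = k := fun h => hkl h.symm
          have hek : e k = 1 := by simp [he, h1, h1', h2]
          rw [hek]; exact m1
        · refine Finset.prod_eq_zero (Finset.mem_univ l) ?_
          have h1 : ¬ i = l := fun h => hli h.symm
          have h1' : ¬ j = l := fun h => h1 (hij.trans h)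
          have hel : e l = 1 := by simp [he, h1, h1', hkl]
          rw [hel]; exact m1
      rw [hz, if_neg (fun h : i = j ∧ k = l ∧ i = k => hkl h.2.1),
        if_neg (fun h : i = j ∧ k = l ∧ i ≠ k => hkl h.2.1),
        if_neg (fun h : i = k ∧ j = l ∧ i ≠ j => h.2.2 hij),
        if_neg (fun h : i = l ∧ j = k ∧ i ≠ j => h.2.2 hij)]
      ring
  · by_cases hik : i = k
    · by_cases hjl : j = l
      · -- pairs (i=k), (j=l), i ≠ j
        rw [prod_moment_two (fun h => hij h : i ≠ j) e (fun c hci hcj => by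
          have h2 := Ne.symm hci; have h3 := Ne.symm hcj
          simp [he, ← hik, ← hjl, h2, h3])]
        have h2 : e i = 2 := by simp [he, ← hik, ← hjl, hij, Ne.symm hij]
        have h2' : e j = 2 := by simp [he, ← hik, ← hjl, hij, Ne.symm hij]
        rw [h2, h2', if_neg (fun h : i = j ∧ k = l ∧ i = k => hij h.1),
          if_neg (fun h : i = j ∧ k = l ∧ i ≠ k => hij h.1),
          if_pos ⟨hik, hjl, hij⟩,
          if_neg (fun h : i = l ∧ j = k ∧ i ≠ j => hij (h.1.trans hjl.symm))]
        ring
      · -- zero, pick j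
        have hz : ∏ c, ∫ t : ℝ, t ^ e c ∂μ = 0 := by
          refine Finset.prod_eq_zero (Finset.mem_univ j) ?_
          have h2 : ¬ k = j := fun h => hij (hik.trans h)
          have h3 : ¬ l = j := fun h => hjl h.symm
          have hej : e j = 1 := by simp [he, hij, h2, h3]
          rw [hej]; exact m1
        rw [hz, if_neg (fun h : i = j ∧ k = l ∧ i = k => hij h.1),
          if_neg (fun h : i = j ∧ k = l ∧ i ≠ k => hij h.1),
          if_neg (fun h : i = k ∧ j = l ∧ i ≠ j => hjl h.2.1),
          if_neg (fun h : i = l ∧ j = k ∧ i ≠ j => hij (hik.trans h.2.1.symm))]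
        ring
    · by_cases hjl : j = l
      · -- zero, pick i
        have hz : ∏ c, ∫ t : ℝ, t ^ e c ∂μ = 0 := by
          refine Finset.prod_eq_zero (Finset.mem_univ i) ?_
          have h2 : ¬ j = i := fun h => hij h.symm
          have h3 : ¬ k = i := fun h => hik h.symm
          have h4 : ¬ l = i := fun h => hij (hjl.trans h).symm
          have hei : e i = 1 := by simp [he, h2, h3, h4]
          rw [hei]; exact m1
        rw [hz, if_neg (fun h : i = j ∧ k = l ∧ i = k => hij h.1),
          if_neg (fun h : i = j ∧ k = l ∧ i ≠ k => hij h.1),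
          if_neg (fun h : i = k ∧ j = l ∧ i ≠ j => hik h.1),
          if_neg (fun h : i = l ∧ j = k ∧ i ≠ j => hij (h.1.trans hjl.symm))]
        ring
      · by_cases hil : i = l
        · by_cases hjk : j = k
          · -- pairs (i=l), (j=k), i ≠ j
            rw [prod_moment_two (fun h => hij h : i ≠ j) e (fun c hci hcj => by
              have h2 := Ne.symm hci; have h3 := Ne.symm hcj
              simp [he, ← hil, ← hjk, h2, h3])]
            have h2 : e i = 2 := by simp [he, ← hil, ← hjk, hij, Ne.symm hij]
            have h2' : e j = 2 := by simp [he, ← hil, ← hjk, hij, Ne.symm hij]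
            rw [h2, h2', if_neg (fun h : i = j ∧ k = l ∧ i = k => hij h.1),
              if_neg (fun h : i = j ∧ k = l ∧ i ≠ k => hij h.1),
              if_neg (fun h : i = k ∧ j = l ∧ i ≠ j => hij (h.1.trans hjk.symm)),
              if_pos ⟨hil, hjk, hij⟩]
            ring
          · -- zero, pick j
            have hz : ∏ c, ∫ t : ℝ, t ^ e c ∂μ = 0 := by
              refine Finset.prod_eq_zero (Finset.mem_univ j) ?_
              have h2 : ¬ k = j := fun h => hjk h.symm
              have h3 : ¬ l = j := fun h => hij (hil.trans h)
              have hej : e j = 1 := by simp [he, hij, h2, h3]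
              rw [hej]; exact m1
            rw [hz, if_neg (fun h : i = j ∧ k = l ∧ i = k => hij h.1),
              if_neg (fun h : i = j ∧ k = l ∧ i ≠ k => hij h.1),
              if_neg (fun h : i = k ∧ j = l ∧ i ≠ j => hjl h.2.1),
              if_neg (fun h : i = l ∧ j = k ∧ i ≠ j => hjk h.2.1)]
            ring
        · -- zero, pick i
          have hz : ∏ c, ∫ t : ℝ, t ^ e c ∂μ = 0 := by
            refine Finset.prod_eq_zero (Finset.mem_univ i) ?_
            have h2 : ¬ j = i := fun h => hij h.symm
            have h3 : ¬ k = i := fun h => hik h.symm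
            have h4 : ¬ l = i := fun h => hil h.symm
            have hei : e i = 1 := by simp [he, h2, h3, h4]
            rw [hei]; exact m1
          rw [hz, if_neg (fun h : i = j ∧ k = l ∧ i = k => hij h.1),
            if_neg (fun h : i = j ∧ k = l ∧ i ≠ k => hij h.1),
            if_neg (fun h : i = k ∧ j = l ∧ i ≠ j => hik h.1),
            if_neg (fun h : i = l ∧ j = k ∧ i ≠ j => hil h.1)]
          ring

lemma my_pi_integrable {n : ℕ} (f : Fin n → ℝ → ℝ) (hf : ∀ i, Integrable (f i) μ) :
    Integrable (fun x : Fin n → ℝ => ∏ i, f i (x i)) (Measure.pi fun _ => μ) := by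
  letI : MeasureSpace ℝ := ⟨μ⟩
  exact Integrable.fintype_prod (f := f) hf

lemma int_pow (hm2 : Integrable (fun x : ℝ => x ^ 2) μ) (hm4 : Integrable (fun x : ℝ => x ^ 4) μ) :
    ∀ n ≤ 4, Integrable (fun x : ℝ => x ^ n) μ := by
  intro n hn
  interval_cases n
  · simpa using integrable_const (1 : ℝ)
  · refine (hm2.add (integrable_const 1)).mono' ?_ ?_
    · exact (measurable_id.pow_const 1).aestronglyMeasurable
    · filter_upwards with x
      have h : |x| ≤ x ^ 2 + 1 := by nlinarith [abs_nonneg x, sq_abs x, sq_nonneg (abs x - 1)]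
      show ‖x ^ 1‖ ≤ x ^ 2 + 1
      rw [Real.norm_eq_abs, pow_one]; exact h
  · exact hm2
  · refine (hm2.add hm4).mono' ?_ ?_
    · exact (measurable_id.pow_const 3).aestronglyMeasurable
    · filter_upwards with x
      have h : |x| ^ 3 ≤ x ^ 2 + x ^ 4 := by
        nlinarith [abs_nonneg x, sq_abs x, sq_nonneg (abs x * (abs x - 1)), sq_nonneg (abs x - 1)]
      show ‖x ^ 3‖ ≤ x ^ 2 + x ^ 4
      rw [Real.norm_eq_abs, abs_pow]; exact h
  · exact hm4

lemma int4 (hm2 : Integrable (fun x : ℝ => x ^ 2) μ) (hm4 : Integrable (fun x : ℝ => x ^ 4) μ)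
    {n : ℕ} (i j k l : Fin n) :
    Integrable (fun x : Fin n → ℝ => x i * x j * x k * x l) (Measure.pi fun _ => μ) := by
  set e : Fin n → ℕ := fun c =>
    (if i = c then 1 else 0) + (if j = c then 1 else 0) + (if k = c then 1 else 0)
      + (if l = c then 1 else 0) with he
  have hx : (fun x : Fin n → ℝ => x i * x j * x k * x l)
      = fun x => ∏ c, (fun (c : Fin n) (t : ℝ) => t ^ e c) c (x c) := by
    funext x
    simp only [he, pow_add, Finset.prod_mul_distrib, pow_ite, pow_zero, pow_one,
      Finset.prod_ite_eq, Finset.mem_univ, if_true]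
  rw [hx]
  refine my_pi_integrable _ (fun c => int_pow hm2 hm4 (e c) ?_)
  simp only [he]
  split_ifs <;> norm_num

lemma expand_sq_sq {n : ℕ} (a b : Fin n → ℝ) (x : Fin n → ℝ) :
    (∑ i, a i * x i) ^ 2 * (∑ i, b i * x i) ^ 2
      = ∑ i, ∑ j, ∑ k, ∑ l, (a i * a j * b k * b l) * (x i * x j * x k * x l) := by
  have h1 : (∑ i, a i * x i) ^ 2 = ∑ i, ∑ j, (a i * x i) * (a j * x j) := by
    rw [sq, Finset.sum_mul_sum]
  have h2 : (∑ i, b i * x i) ^ 2 = ∑ k, ∑ l, (b k * x k) * (b l * x l) := by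
    rw [sq, Finset.sum_mul_sum]
  rw [h1, h2]
  rw [Finset.sum_mul]
  refine Finset.sum_congr rfl fun i _ => ?_
  rw [Finset.sum_mul]
  refine Finset.sum_congr rfl fun j _ => ?_
  rw [Finset.mul_sum]
  refine Finset.sum_congr rfl fun k _ => ?_
  rw [Finset.mul_sum]
  refine Finset.sum_congr rfl fun l _ => by ring


section L2
variable (hmean : ∫ x, x ∂μ = 0) (hm2 : Integrable (fun x : ℝ => x ^ 2) μ)
  (hm4 : Integrable (fun x : ℝ => x ^ 4) μ)


lemma sum_ite_ne {n : ℕ} (v : Fin n → Fin n → ℝ) :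
    (∑ i, ∑ k, if i = k then 0 else v i k) = ∑ i, ∑ k ∈ Finset.univ \ {i}, v i k := by
  refine Finset.sum_congr rfl fun i _ => ?_
  have h := Finset.sum_subset (Finset.subset_univ (Finset.univ \ {i}))
    (f := fun k => if i = k then 0 else v i k) (fun x _ hx => by
      simp only [Finset.mem_sdiff, Finset.mem_univ, Finset.mem_singleton, true_and, not_not] at hx
      simp [hx])
  rw [← h]
  refine Finset.sum_congr rfl fun k hk => ?_
  simp only [Finset.mem_sdiff, Finset.mem_univ, Finset.mem_singleton, true_and] at hk
  show (if i = k then 0 else v i k) = v i k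
  exact if_neg (fun h' => hk h'.symm)

include hmean hm2 hm4 in
lemma L2 {n : ℕ} (a b : Fin n → ℝ) :
    ∫ x : Fin n → ℝ, (∑ i, a i * x i) ^ 2 * (∑ i, b i * x i) ^ 2
        ∂(Measure.pi fun _ => μ)
      = (∫ t, t ^ 4 ∂μ) * (∑ i, a i ^ 2 * b i ^ 2)
        + (∫ t, t ^ 2 ∂μ) ^ 2 * ∑ i, ∑ k ∈ Finset.univ \ {i},
            (a i ^ 2 * b k ^ 2 + 2 * (a i * b i) * (a k * b k)) := by
  have I1 : ∀ i j k l : Fin n, Integrable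
      (fun x : Fin n → ℝ => (a i * a j * b k * b l) * (x i * x j * x k * x l))
      (Measure.pi fun _ => μ) := fun i j k l => (int4 (μ := μ) hm2 hm4 i j k l).const_mul _
  have J2 : ∀ i j k : Fin n, Integrable
      (fun x : Fin n → ℝ => ∑ l, (a i * a j * b k * b l) * (x i * x j * x k * x l))
      (Measure.pi fun _ => μ) :=
    fun i j k => integrable_finset_sum _ (fun l _ => I1 i j k l)
  have J3 : ∀ i j : Fin n, Integrable
      (fun x : Fin n → ℝ => ∑ k, ∑ l, (a i * a j * b k * b l) * (x i * x j * x k * x l))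
      (Measure.pi fun _ => μ) :=
    fun i j => integrable_finset_sum _ (fun k _ => J2 i j k)
  have J4 : ∀ i : Fin n, Integrable
      (fun x : Fin n → ℝ => ∑ j, ∑ k, ∑ l, (a i * a j * b k * b l) * (x i * x j * x k * x l))
      (Measure.pi fun _ => μ) :=
    fun i => integrable_finset_sum _ (fun j _ => J3 i j)
  have hswap : ∫ x : Fin n → ℝ, (∑ i, a i * x i) ^ 2 * (∑ i, b i * x i) ^ 2
        ∂(Measure.pi fun _ => μ)
      = ∑ i, ∑ j, ∑ k, ∑ l, (a i * a j * b k * b l) *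
          ∫ x : Fin n → ℝ, x i * x j * x k * x l ∂(Measure.pi fun _ => μ) := by
    simp_rw [expand_sq_sq a b]
    rw [integral_finset_sum _ (fun i _ => J4 i)]
    refine Finset.sum_congr rfl fun i _ => ?_
    rw [integral_finset_sum _ (fun j _ => J3 i j)]
    refine Finset.sum_congr rfl fun j _ => ?_
    rw [integral_finset_sum _ (fun k _ => J2 i j k)]
    refine Finset.sum_congr rfl fun k _ => ?_
    rw [integral_finset_sum _ (fun l _ => I1 i j k l)]
    refine Finset.sum_congr rfl fun l _ => ?_
    exact integral_const_mul _ _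
  rw [hswap]
  simp_rw [moment4 (μ := μ) hmean]
  simp only [mul_add, Finset.sum_add_distrib, mul_ite, mul_zero, ite_and, ite_not,
    Finset.sum_ite_irrel, Finset.sum_ite_eq, Finset.sum_ite_eq', Finset.mem_univ, if_true,
    Finset.sum_const_zero]
  rw [sum_ite_ne, sum_ite_ne, sum_ite_ne]
  simp only [Finset.mul_sum, ← Finset.sum_add_distrib]
  refine Finset.sum_congr rfl fun i _ => ?_
  have e1 : ∑ k ∈ Finset.univ \ {i}, (∫ (x : ℝ), x ^ 2 ∂μ) ^ 2 * (a i ^ 2 * b k ^ 2)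
      = ∑ k ∈ Finset.univ \ {i}, a i * a i * b k * b k * (∫ (x : ℝ), x ^ 2 ∂μ) ^ 2 :=
    Finset.sum_congr rfl fun k _ => by ring
  have e2 : ∑ k ∈ Finset.univ \ {i}, (∫ (x : ℝ), x ^ 2 ∂μ) ^ 2 * (2 * (a i * b i) * (a k * b k))
      = ∑ k ∈ Finset.univ \ {i}, a i * a k * b i * b k * (∫ (x : ℝ), x ^ 2 ∂μ) ^ 2
        + ∑ k ∈ Finset.univ \ {i}, a i * a k * b k * b i * (∫ (x : ℝ), x ^ 2 ∂μ) ^ 2 := by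
    rw [← Finset.sum_add_distrib]
    exact Finset.sum_congr rfl fun k _ => by ring
  rw [Finset.sum_add_distrib, e1, e2]
  ring

include hm2 hm4 in
lemma L2int {n : ℕ} (a b : Fin n → ℝ) :
    Integrable (fun x : Fin n → ℝ => (∑ i, a i * x i) ^ 2 * (∑ i, b i * x i) ^ 2)
      (Measure.pi fun _ => μ) := by
  have h : (fun x : Fin n → ℝ => (∑ i, a i * x i) ^ 2 * (∑ i, b i * x i) ^ 2)
      = fun x => ∑ i, ∑ j, ∑ k, ∑ l, (a i * a j * b k * b l) * (x i * x j * x k * x l) :=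
    funext (expand_sq_sq a b)
  rw [h]
  exact integrable_finset_sum _ (fun i _ => integrable_finset_sum _ (fun j _ =>
    integrable_finset_sum _ (fun k _ => integrable_finset_sum _ (fun l _ =>
      (int4 (μ := μ) hm2 hm4 i j k l).const_mul _))))

end L2
end

lemma sum_pow_four {ι : Type*} [Fintype ι] (f : ι → ℝ) :
    (∑ p, f p) ^ 4 = ∑ p1, ∑ p2, ∑ p3, ∑ p4, f p1 * f p2 * f p3 * f p4 := by
  have t2 : (∑ p, f p) ^ 2 = ∑ p1, ∑ p2, f p1 * f p2 := by rw [sq, Finset.sum_mul_sum]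
  have t3 : (∑ p, f p) ^ 3 = ∑ p1, ∑ p2, ∑ p3, f p1 * f p2 * f p3 := by
    rw [pow_succ, t2, Finset.sum_mul]
    refine Finset.sum_congr rfl fun p1 _ => ?_
    rw [Finset.sum_mul]
    refine Finset.sum_congr rfl fun p2 _ => ?_
    rw [Finset.mul_sum]
  rw [show (4 : ℕ) = 3 + 1 from rfl, pow_succ, t3, Finset.sum_mul]
  refine Finset.sum_congr rfl fun p1 _ => ?_
  rw [Finset.sum_mul]
  refine Finset.sum_congr rfl fun p2 _ => ?_
  rw [Finset.sum_mul]
  refine Finset.sum_congr rfl fun p3 _ => ?_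
  rw [Finset.mul_sum]


/-- Fourth moment of the antisymmetric quadratic form: for a zero-mean
probability measure `μ` on `ℝ` with finite second moment `m₂` and fourth moment `m₄`,
independent `ε₁, ε₂` with i.i.d. coordinates from `μ`, and `B = A − Aᵀ`,
`E[(ε₂ᵀ B ε₁)⁴] = m₄² Σ_{a,b} B_{ab}⁴ + 6 m₂² m₄ Σ_a Σ_{b≠d'} B_{ab}² B_{ad'}²
 + 3 m₂⁴ Σ_{a≠c} Σ_{b≠d'} (B_{ab}² B_{cd'}² + 2 B_{ab} B_{ad'} B_{cb} B_{cd'})`. -/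
theorem fourth_moment_antisymmetric_quadratic_form {d : ℕ} (hd : 1 ≤ d)
    (μ : Measure ℝ) [IsProbabilityMeasure μ]
    (hmean : ∫ x, x ∂μ = 0)
    (hm2 : Integrable (fun x => x ^ 2) μ) (hm4 : Integrable (fun x => x ^ 4) μ)
    (A : Matrix (Fin d) (Fin d) ℝ) :
    ∫ ε : (Fin d → ℝ) × (Fin d → ℝ),
        (∑ i, ∑ j, ε.2 i * (A - Aᵀ) i j * ε.1 j) ^ 4
      ∂((Measure.pi fun _ : Fin d => μ).prod (Measure.pi fun _ : Fin d => μ))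
      = (∫ x, x ^ 4 ∂μ) ^ 2 * (∑ a, ∑ b, (A - Aᵀ) a b ^ 4)
        + 6 * (∫ x, x ^ 2 ∂μ) ^ 2 * (∫ x, x ^ 4 ∂μ) *
            (∑ a, ∑ b, ∑ d' ∈ Finset.univ \ {b}, (A - Aᵀ) a b ^ 2 * (A - Aᵀ) a d' ^ 2)
        + 3 * (∫ x, x ^ 2 ∂μ) ^ 4 *
            (∑ a, ∑ c ∈ Finset.univ \ {a}, ∑ b, ∑ d' ∈ Finset.univ \ {b},
              ((A - Aᵀ) a b ^ 2 * (A - Aᵀ) c d' ^ 2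
                + 2 * (A - Aᵀ) a b * (A - Aᵀ) a d' * (A - Aᵀ) c b * (A - Aᵀ) c d')) := by
  set B : Matrix (Fin d) (Fin d) ℝ := A - Aᵀ with hBdef
  have hFint : Integrable (fun ε : (Fin d → ℝ) × (Fin d → ℝ) =>
      (∑ i, ∑ j, ε.2 i * B i j * ε.1 j) ^ 4)
      ((Measure.pi fun _ : Fin d => μ).prod (Measure.pi fun _ : Fin d => μ)) := by
    have hexp : (fun ε : (Fin d → ℝ) × (Fin d → ℝ) => (∑ i, ∑ j, ε.2 i * B i j * ε.1 j) ^ 4)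
        = fun ε => ∑ p1 : Fin d × Fin d, ∑ p2 : Fin d × Fin d, ∑ p3 : Fin d × Fin d,
            ∑ p4 : Fin d × Fin d,
            (B p1.1 p1.2 * B p2.1 p2.2 * B p3.1 p3.2 * B p4.1 p4.2) *
              ((ε.1 p1.2 * ε.1 p2.2 * ε.1 p3.2 * ε.1 p4.2)
                * (ε.2 p1.1 * ε.2 p2.1 * ε.2 p3.1 * ε.2 p4.1)) := by
      funext ε
      have h0 : (∑ i, ∑ j, ε.2 i * B i j * ε.1 j)
          = ∑ p : Fin d × Fin d, ε.2 p.1 * B p.1 p.2 * ε.1 p.2 := by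
        rw [Fintype.sum_prod_type]
      rw [h0, sum_pow_four]
      refine Finset.sum_congr rfl fun p1 _ => Finset.sum_congr rfl fun p2 _ =>
        Finset.sum_congr rfl fun p3 _ => Finset.sum_congr rfl fun p4 _ => by ring
    rw [hexp]
    refine integrable_finset_sum _ (fun p1 _ => integrable_finset_sum _ (fun p2 _ =>
      integrable_finset_sum _ (fun p3 _ => integrable_finset_sum _ (fun p4 _ => ?_))))
    exact (Integrable.mul_prod (int4 (μ := μ) hm2 hm4 p1.2 p2.2 p3.2 p4.2)
      (int4 (μ := μ) hm2 hm4 p1.1 p2.1 p3.1 p4.1)).const_mul _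
  rw [MeasureTheory.integral_prod _ hFint]
  have hInner : ∀ x : Fin d → ℝ,
      ∫ y : Fin d → ℝ, (∑ i, ∑ j, y i * B i j * x j) ^ 4 ∂(Measure.pi fun _ : Fin d => μ)
        = (∫ t, t ^ 4 ∂μ) * (∑ i, (∑ j, B i j * x j) ^ 2 * (∑ j, B i j * x j) ^ 2)
          + (∫ t, t ^ 2 ∂μ) ^ 2 * ∑ i, ∑ k ∈ Finset.univ \ {i},
              ((∑ j, B i j * x j) ^ 2 * (∑ j, B k j * x j) ^ 2
                + 2 * ((∑ j, B i j * x j) * (∑ j, B i j * x j))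
                  * ((∑ j, B k j * x j) * (∑ j, B k j * x j))) := by
    intro x
    have hy : ∀ y : Fin d → ℝ, (∑ i, ∑ j, y i * B i j * x j) ^ 4
        = (∑ i, (∑ j, B i j * x j) * y i) ^ 2 * (∑ i, (∑ j, B i j * x j) * y i) ^ 2 := by
      intro y
      have hst : (∑ i, ∑ j, y i * B i j * x j) = ∑ i, (∑ j, B i j * x j) * y i :=
        Finset.sum_congr rfl fun i _ => by
          rw [Finset.sum_mul]
          exact Finset.sum_congr rfl fun j _ => by ring
      rw [hst]; ring
    simp_rw [hy]
    have := L2 (μ := μ) hmean hm2 hm4 (fun i => ∑ j, B i j * x j) (fun i => ∑ j, B i j * x j)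
    simpa using this
  have hstep : (∫ x : Fin d → ℝ, ∫ y : Fin d → ℝ,
        (∑ i, ∑ j, (x, y).2 i * B i j * (x, y).1 j) ^ 4
        ∂(Measure.pi fun _ : Fin d => μ) ∂(Measure.pi fun _ : Fin d => μ))
      = ∫ x : Fin d → ℝ,
          ((∫ t, t ^ 4 ∂μ) * (∑ i, (∑ j, B i j * x j) ^ 2 * (∑ j, B i j * x j) ^ 2)
            + (∫ t, t ^ 2 ∂μ) ^ 2 * ∑ i, ∑ k ∈ Finset.univ \ {i},
                ((∑ j, B i j * x j) ^ 2 * (∑ j, B k j * x j) ^ 2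
                  + 2 * ((∑ j, B i j * x j) * (∑ j, B i j * x j))
                    * ((∑ j, B k j * x j) * (∑ j, B k j * x j))))
          ∂(Measure.pi fun _ : Fin d => μ) :=
    integral_congr_ae (Filter.Eventually.of_forall fun x => hInner x)
  rw [hstep]
  have hQint : ∀ i k : Fin d, Integrable
      (fun x : Fin d → ℝ => (∑ j, B i j * x j) ^ 2 * (∑ j, B k j * x j) ^ 2)
      (Measure.pi fun _ : Fin d => μ) :=
    fun i k => L2int (μ := μ) hm2 hm4 _ _
  have hS2int : ∀ i k : Fin d, Integrable
      (fun x : Fin d → ℝ => (∑ j, B i j * x j) ^ 2 * (∑ j, B k j * x j) ^ 2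
        + 2 * ((∑ j, B i j * x j) * (∑ j, B i j * x j))
          * ((∑ j, B k j * x j) * (∑ j, B k j * x j)))
      (Measure.pi fun _ : Fin d => μ) :=
    fun i k => ((hQint i k).const_mul 3).congr (Filter.Eventually.of_forall fun x => by ring)
  have h1 : Integrable (fun x : Fin d → ℝ =>
      ∑ i, (∑ j, B i j * x j) ^ 2 * (∑ j, B i j * x j) ^ 2)
      (Measure.pi fun _ : Fin d => μ) :=
    integrable_finset_sum _ fun i _ => hQint i i
  have h2 : Integrable (fun x : Fin d → ℝ =>
      ∑ i, ∑ k ∈ Finset.univ \ {i},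
        ((∑ j, B i j * x j) ^ 2 * (∑ j, B k j * x j) ^ 2
          + 2 * ((∑ j, B i j * x j) * (∑ j, B i j * x j))
            * ((∑ j, B k j * x j) * (∑ j, B k j * x j))))
      (Measure.pi fun _ : Fin d => μ) :=
    integrable_finset_sum _ fun i _ => integrable_finset_sum _ fun k _ => hS2int i k
  rw [integral_add (h1.const_mul _) (h2.const_mul _), integral_const_mul, integral_const_mul,
    integral_finset_sum _ (fun i _ => hQint i i),
    integral_finset_sum _ (fun i _ => integrable_finset_sum _ fun k _ => hS2int i k)]
  have hJ : ∀ i k : Fin d, (∫ x : Fin d → ℝ,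
        (∑ j, B i j * x j) ^ 2 * (∑ j, B k j * x j) ^ 2 ∂(Measure.pi fun _ : Fin d => μ))
      = (∫ t, t ^ 4 ∂μ) * (∑ j, B i j ^ 2 * B k j ^ 2)
        + (∫ t, t ^ 2 ∂μ) ^ 2 * ∑ j, ∑ l ∈ Finset.univ \ {j},
            (B i j ^ 2 * B k l ^ 2 + 2 * (B i j * B k j) * (B i l * B k l)) :=
    fun i k => L2 (μ := μ) hmean hm2 hm4 (fun j => B i j) (fun j => B k j)
  have e1 : (∑ i, ∫ a : Fin d → ℝ,
        (∑ j, B i j * a j) ^ 2 * (∑ j, B i j * a j) ^ 2 ∂(Measure.pi fun _ : Fin d => μ))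
      = ∑ i, ((∫ t, t ^ 4 ∂μ) * (∑ j, B i j ^ 2 * B i j ^ 2)
          + (∫ t, t ^ 2 ∂μ) ^ 2 * ∑ j, ∑ l ∈ Finset.univ \ {j},
              (B i j ^ 2 * B i l ^ 2 + 2 * (B i j * B i j) * (B i l * B i l))) :=
    Finset.sum_congr rfl fun i _ => hJ i i
  have e2 : (∑ i, ∫ a : Fin d → ℝ,
        ∑ k ∈ Finset.univ \ {i},
          ((∑ j, B i j * a j) ^ 2 * (∑ j, B k j * a j) ^ 2
            + 2 * ((∑ j, B i j * a j) * (∑ j, B i j * a j))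
              * ((∑ j, B k j * a j) * (∑ j, B k j * a j)))
        ∂(Measure.pi fun _ : Fin d => μ))
      = ∑ i, ∑ k ∈ Finset.univ \ {i},
          3 * ((∫ t, t ^ 4 ∂μ) * (∑ j, B i j ^ 2 * B k j ^ 2)
            + (∫ t, t ^ 2 ∂μ) ^ 2 * ∑ j, ∑ l ∈ Finset.univ \ {j},
                (B i j ^ 2 * B k l ^ 2 + 2 * (B i j * B k j) * (B i l * B k l))) := by
    refine Finset.sum_congr rfl fun i _ => ?_
    rw [integral_finset_sum _ (fun k _ => hS2int i k)]
    refine Finset.sum_congr rfl fun k _ => ?_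
    have h3 : (∫ x : Fin d → ℝ,
          ((∑ j, B i j * x j) ^ 2 * (∑ j, B k j * x j) ^ 2
            + 2 * ((∑ j, B i j * x j) * (∑ j, B i j * x j))
              * ((∑ j, B k j * x j) * (∑ j, B k j * x j)))
          ∂(Measure.pi fun _ : Fin d => μ))
        = ∫ x : Fin d → ℝ,
            3 * ((∑ j, B i j * x j) ^ 2 * (∑ j, B k j * x j) ^ 2)
            ∂(Measure.pi fun _ : Fin d => μ) :=
      integral_congr_ae (Filter.Eventually.of_forall fun x => by ring)
    rw [h3, integral_const_mul, hJ i k]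
  rw [e1, e2]
  have hsq : ∀ p q : Fin d, B p q ^ 2 = B q p ^ 2 := by
    intro p q
    have h : B p q = - B q p := by
      simp only [hBdef, Matrix.sub_apply, Matrix.transpose_apply]; ring
    rw [h]; ring
  -- distribute the first sum
  have hD1 : (∑ i, ((∫ t, t ^ 4 ∂μ) * (∑ j, B i j ^ 2 * B i j ^ 2)
        + (∫ t, t ^ 2 ∂μ) ^ 2 * ∑ j, ∑ l ∈ Finset.univ \ {j},
            (B i j ^ 2 * B i l ^ 2 + 2 * (B i j * B i j) * (B i l * B i l))))
      = (∫ t, t ^ 4 ∂μ) * (∑ a, ∑ b, B a b ^ 4)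
        + (∫ t, t ^ 2 ∂μ) ^ 2 * (3 * ∑ a, ∑ b, ∑ d' ∈ Finset.univ \ {b},
            B a b ^ 2 * B a d' ^ 2) := by
    rw [Finset.sum_add_distrib, ← Finset.mul_sum, ← Finset.mul_sum]
    congr 1
    · congr 1
      exact Finset.sum_congr rfl fun a _ => Finset.sum_congr rfl fun b _ => by ring
    · congr 1
      rw [Finset.mul_sum]
      refine Finset.sum_congr rfl fun a _ => ?_
      rw [Finset.mul_sum]
      refine Finset.sum_congr rfl fun b _ => ?_
      rw [Finset.mul_sum]
      exact Finset.sum_congr rfl fun d' _ => by ring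
  have hD2 : (∑ i, ∑ k ∈ Finset.univ \ {i},
        3 * ((∫ t, t ^ 4 ∂μ) * (∑ j, B i j ^ 2 * B k j ^ 2)
          + (∫ t, t ^ 2 ∂μ) ^ 2 * ∑ j, ∑ l ∈ Finset.univ \ {j},
              (B i j ^ 2 * B k l ^ 2 + 2 * (B i j * B k j) * (B i l * B k l))))
      = (3 * ∫ t, t ^ 4 ∂μ) * (∑ a, ∑ b, ∑ d' ∈ Finset.univ \ {b},
            B a b ^ 2 * B a d' ^ 2)
        + (3 * (∫ t, t ^ 2 ∂μ) ^ 2) * (∑ a, ∑ c ∈ Finset.univ \ {a}, ∑ b,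
            ∑ d' ∈ Finset.univ \ {b},
            (B a b ^ 2 * B c d' ^ 2 + 2 * B a b * B a d' * B c b * B c d')) := by
    have hsplit : ∀ i : Fin d, ∀ k : Fin d,
        3 * ((∫ t, t ^ 4 ∂μ) * (∑ j, B i j ^ 2 * B k j ^ 2)
          + (∫ t, t ^ 2 ∂μ) ^ 2 * ∑ j, ∑ l ∈ Finset.univ \ {j},
              (B i j ^ 2 * B k l ^ 2 + 2 * (B i j * B k j) * (B i l * B k l)))
        = (3 * ∫ t, t ^ 4 ∂μ) * (∑ j, B i j ^ 2 * B k j ^ 2)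
          + (3 * (∫ t, t ^ 2 ∂μ) ^ 2) * ∑ j, ∑ l ∈ Finset.univ \ {j},
              (B i j ^ 2 * B k l ^ 2 + 2 * B i j * B i l * B k j * B k l) := by
      intro i k
      have : (∑ j, ∑ l ∈ Finset.univ \ {j},
          (B i j ^ 2 * B k l ^ 2 + 2 * (B i j * B k j) * (B i l * B k l)))
          = ∑ j, ∑ l ∈ Finset.univ \ {j},
          (B i j ^ 2 * B k l ^ 2 + 2 * B i j * B i l * B k j * B k l) :=
        Finset.sum_congr rfl fun j _ => Finset.sum_congr rfl fun l _ => by ring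
      rw [this]; ring
    calc (∑ i, ∑ k ∈ Finset.univ \ {i},
        3 * ((∫ t, t ^ 4 ∂μ) * (∑ j, B i j ^ 2 * B k j ^ 2)
          + (∫ t, t ^ 2 ∂μ) ^ 2 * ∑ j, ∑ l ∈ Finset.univ \ {j},
              (B i j ^ 2 * B k l ^ 2 + 2 * (B i j * B k j) * (B i l * B k l))))
        = ∑ i, ∑ k ∈ Finset.univ \ {i},
            ((3 * ∫ t, t ^ 4 ∂μ) * (∑ j, B i j ^ 2 * B k j ^ 2)
              + (3 * (∫ t, t ^ 2 ∂μ) ^ 2) * ∑ j, ∑ l ∈ Finset.univ \ {j},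
                  (B i j ^ 2 * B k l ^ 2 + 2 * B i j * B i l * B k j * B k l)) :=
          Finset.sum_congr rfl fun i _ => Finset.sum_congr rfl fun k _ => hsplit i k
      _ = (∑ i, ∑ k ∈ Finset.univ \ {i},
            (3 * ∫ t, t ^ 4 ∂μ) * (∑ j, B i j ^ 2 * B k j ^ 2))
          + ∑ i, ∑ k ∈ Finset.univ \ {i},
            (3 * (∫ t, t ^ 2 ∂μ) ^ 2) * ∑ j, ∑ l ∈ Finset.univ \ {j},
              (B i j ^ 2 * B k l ^ 2 + 2 * B i j * B i l * B k j * B k l) := by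
          rw [← Finset.sum_add_distrib]
          exact Finset.sum_congr rfl fun i _ => Finset.sum_add_distrib
      _ = (3 * ∫ t, t ^ 4 ∂μ) * (∑ i, ∑ k ∈ Finset.univ \ {i}, ∑ j, B i j ^ 2 * B k j ^ 2)
          + (3 * (∫ t, t ^ 2 ∂μ) ^ 2) * (∑ i, ∑ k ∈ Finset.univ \ {i}, ∑ j,
              ∑ l ∈ Finset.univ \ {j},
              (B i j ^ 2 * B k l ^ 2 + 2 * B i j * B i l * B k j * B k l)) := by
          rw [Finset.mul_sum, Finset.mul_sum]
          congr 1 <;> exact Finset.sum_congr rfl fun i _ => by rw [Finset.mul_sum]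
      _ = _ := by
          have hswap : (∑ i, ∑ k ∈ Finset.univ \ {i}, ∑ j, B i j ^ 2 * B k j ^ 2)
              = ∑ j, ∑ i, ∑ k ∈ Finset.univ \ {i}, B j i ^ 2 * B j k ^ 2 := by
            calc (∑ i, ∑ k ∈ Finset.univ \ {i}, ∑ j, B i j ^ 2 * B k j ^ 2)
                = ∑ i, ∑ k ∈ Finset.univ \ {i}, ∑ j, B j i ^ 2 * B j k ^ 2 :=
                  Finset.sum_congr rfl fun i _ => Finset.sum_congr rfl fun k _ =>
                    Finset.sum_congr rfl fun j _ => by rw [hsq i j, hsq k j]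
              _ = ∑ i, ∑ j, ∑ k ∈ Finset.univ \ {i}, B j i ^ 2 * B j k ^ 2 :=
                  Finset.sum_congr rfl fun i _ => Finset.sum_comm
              _ = ∑ j, ∑ i, ∑ k ∈ Finset.univ \ {i}, B j i ^ 2 * B j k ^ 2 :=
                  Finset.sum_comm
          rw [hswap]
  rw [hD1, hD2]
  ring
end
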